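/- No ordinal metric on ω₁ is an ultrametric; that is, there is no function ρ : ω₁² → ω satisfying the axioms of an ordinal metric and additionally ρ(α,β) ≤ max(ρ(α,γ), ρ(γ,β)) for all α, β, γ ∈ ω₁. -/

import Mathlib

open Set

/-- An ordinal metric on a set of ordinals `X`. -/
def IsOrdinalMetric (X : Set Ordinal) (ρ : Ordinal → Ordinal → ℕ) : Prop :=
  (∀ α ∈ X, ∀ β ∈ X, (ρ α β = 0 ↔ α = β)) ∧
  (∀ α ∈ X, ∀ β ∈ X, ρ α β = ρ β α) ∧
  (∀ α ∈ X, ∀ β ∈ X, ∀ γ ∈ X, α < β → α < γ → ρ α β ≤ max (ρ α γ) (ρ β γ)) ∧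
  (∀ β ∈ X, ∀ k : ℕ, {α ∈ X | α ≤ β ∧ ρ α β ≤ k}.Finite)

/-- No ordinal metric on `ω₁` is an ultrametric. -/
theorem stmt8 :
    ¬ ∃ ρ : Ordinal → Ordinal → ℕ,
      IsOrdinalMetric (Set.Iio (Ordinal.omega 1)) ρ ∧
      ∀ α ∈ (Set.Iio (Ordinal.omega 1)), ∀ β ∈ (Set.Iio (Ordinal.omega 1)), ∀ γ ∈ (Set.Iio (Ordinal.omega 1)),
        ρ α β ≤ max (ρ α γ) (ρ γ β) := by
  rintro ⟨ρ, ⟨h0, hsym, _, hfin⟩, hultra⟩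
  have h0Ω : (0 : Ordinal) ∈ Set.Iio (Ordinal.omega 1) := Ordinal.omega_pos 1
  -- Every ball around 0 is finite.
  have hball : ∀ k : ℕ, {α ∈ Set.Iio (Ordinal.omega 1) | ρ α 0 ≤ k}.Finite := by
    intro k
    by_contra hinf
    have hinf' : {α ∈ Set.Iio (Ordinal.omega 1) | ρ α 0 ≤ k}.Infinite := hinf
    have f := Set.Infinite.natEmbedding _ hinf'
    set o : ℕ → Ordinal := fun n => (f n : Ordinal) with ho
    have homem : ∀ n, o n ∈ {α ∈ Set.Iio (Ordinal.omega 1) | ρ α 0 ≤ k} := fun n => (f n).2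
    have hoΩ : ∀ n, o n < Ordinal.omega 1 := fun n => (homem n).1
    have hoΩ' : ∀ n, o n < (Cardinal.aleph 1).ord := by
      intro n; rw [Cardinal.ord_aleph]; exact hoΩ n
    have hδ : iSup o < Ordinal.omega 1 := by
      have := Ordinal.iSup_lt_omega_one (f := o) hoΩ
      exact this
    set β : Ordinal := iSup o + 1 with hβ
    have hβΩ : β ∈ Set.Iio (Ordinal.omega 1) := by simpa [Order.succ_eq_add_one] using (Cardinal.isSuccLimit_omega 1).succ_lt hδ
    set K : ℕ := max k (ρ 0 β) with hK
    have hsub : ∀ n, o n ∈ {α ∈ Set.Iio (Ordinal.omega 1) | α ≤ β ∧ ρ α β ≤ K} := by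
      intro n
      refine ⟨hoΩ n, ?_, ?_⟩
      · exact le_of_lt (lt_of_le_of_lt (Ordinal.le_iSup o n) (lt_add_one _))
      · calc ρ (o n) β ≤ max (ρ (o n) 0) (ρ 0 β) :=
              hultra _ (hoΩ n) _ hβΩ.out _ h0Ω
          _ ≤ K := max_le_max (homem n).2 le_rfl
    have hinj : Function.Injective o := fun m n hmn => by
      have := f.injective (Subtype.ext hmn); exact this
    exact Set.infinite_of_injective_forall_mem hinj hsub (hfin β hβΩ K)
  -- The union of the balls covers `Iio ω₁`, hence it would be countable.
  have hcover : Set.Iio (Ordinal.omega 1) ⊆ ⋃ k : ℕ, {α ∈ Set.Iio (Ordinal.omega 1) | ρ α 0 ≤ k} := by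
    intro α hα
    exact Set.mem_iUnion.2 ⟨ρ α 0, hα, le_rfl⟩
  have hcount : (Set.Iio (Ordinal.omega 1)).Countable :=
    Set.Countable.mono hcover (Set.countable_iUnion fun k => (hball k).countable)
  have hcard := hcount.le_aleph0
  rw [Ordinal.mk_Iio_ordinal, Ordinal.card_omega] at hcard
  rw [Cardinal.lift_le_aleph0] at hcard
  exact absurd hcard (not_le.2 Cardinal.aleph0_lt_aleph_one)
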